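/- The matrix (I − A_R)·P_{S,R} is symmetric, and P_{S,R}ᵀ·(I − A_R)·(I − P_{S,R}) = 0; that is, P_{S,R} is self-adjoint-and-orthogonal with respect to the positive semidefinite bilinear form (β, β') ↦ ⟨β, (I − A_R)·β'⟩. -/
import Mathlib


open Matrix

/-- `(I − A_R)·P_{S,R}` is symmetric and
`P_{S,R}ᵀ·(I − A_R)·(I − P_{S,R}) = 0`; i.e. `P_{S,R}` is self-adjoint and
orthogonal with respect to the PSD bilinear form `(β, β') ↦ ⟨β, (I − A_R)·β'⟩`. -/
theorem oblique_projection_selfAdjoint_orthogonal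
    {N q : ℕ} (hN : 0 < N) (hq : 0 < q)
    (S : Matrix (Fin N) (Fin N) ℝ) (hS : S.PosSemidef)
    (R : ℝ) (hR : 0 < R)
    (Z : Matrix (Fin q) (Fin N) ℝ)
    (hZ1 : (Zᵀ * Z) * (Zᵀ * Z) = Zᵀ * Z)
    (hZ2 : (Z * Zᵀ) * (Z * Zᵀ) = Z * Zᵀ)
    (hSR : (S + R • (1 : Matrix (Fin N) (Fin N) ℝ)).PosDef)
    (A : Matrix (Fin N) (Fin N) ℝ)
    (hA : A = R • (S + R • (1 : Matrix (Fin N) (Fin N) ℝ))⁻¹)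
    (Λ : Matrix (Fin q) (Fin q) ℝ)
    (hΛ : Λ = (1 : Matrix (Fin q) (Fin q) ℝ) - Z * A * Zᵀ)
    (hΛunit : IsUnit Λ)
    (P : Matrix (Fin N) (Fin N) ℝ)
    (hP : P = Zᵀ * Λ⁻¹ * Z * ((1 : Matrix (Fin N) (Fin N) ℝ) - A)) :
    (((1 : Matrix (Fin N) (Fin N) ℝ) - A) * P)ᵀ =
        ((1 : Matrix (Fin N) (Fin N) ℝ) - A) * P ∧
      Pᵀ * ((1 : Matrix (Fin N) (Fin N) ℝ) - A) *
        ((1 : Matrix (Fin N) (Fin N) ℝ) - P) = 0 := by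
  -- A is symmetric
  have hST : Sᵀ = S := by
    rw [← Matrix.conjTranspose_eq_transpose_of_trivial]; exact hS.1
  have hSRT : (S + R • (1 : Matrix (Fin N) (Fin N) ℝ))ᵀ = S + R • 1 := by
    simp [Matrix.transpose_add, hST]
  have hAT : Aᵀ = A := by
    rw [hA, Matrix.transpose_smul, Matrix.transpose_nonsing_inv, hSRT]
  have hBT : ((1 : Matrix (Fin N) (Fin N) ℝ) - A)ᵀ = 1 - A := by
    simp [Matrix.transpose_sub, hAT]
  -- Z * Zᵀ * Z = Z
  have hZZZ : Z * Zᵀ * Z = Z := by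
    have hZ1' : Zᵀ * Z * Zᵀ * Z = Zᵀ * Z := by
      rw [Matrix.mul_assoc (Zᵀ * Z) Zᵀ Z]; exact hZ1
    have hzero : (Z - Z * (Zᵀ * Z))ᵀ * (Z - Z * (Zᵀ * Z)) = 0 := by
      simp only [Matrix.transpose_sub, Matrix.transpose_mul, Matrix.transpose_transpose,
        Matrix.sub_mul, Matrix.mul_sub, ← Matrix.mul_assoc, hZ1']
      abel
    have : Z - Z * (Zᵀ * Z) = 0 := by
      have h := Matrix.conjTranspose_mul_self_eq_zero
        (A := Z - Z * (Zᵀ * Z)) (R := ℝ)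
      rw [Matrix.conjTranspose_eq_transpose_of_trivial] at h
      exact h.mp hzero
    rw [Matrix.mul_assoc]
    linear_combination (norm := abel) -this
  have hZTZ : Zᵀ * Z * Zᵀ = Zᵀ := by
    have := congrArg Matrix.transpose hZZZ
    simpa [Matrix.transpose_mul, Matrix.mul_assoc] using this
  have hZT : Zᵀ * (Z * Zᵀ) = Zᵀ := by rw [← Matrix.mul_assoc]; exact hZTZ
  -- Λ facts
  have hdet : IsUnit Λ.det := (Matrix.isUnit_iff_isUnit_det Λ).mp hΛunit
  have hinv1 : Λ * Λ⁻¹ = 1 := Matrix.mul_nonsing_inv Λ hdet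
  have hinv2 : Λ⁻¹ * Λ = 1 := Matrix.nonsing_inv_mul Λ hdet
  have hΛT : Λᵀ = Λ := by
    rw [hΛ]
    simp [Matrix.transpose_sub, Matrix.transpose_mul, hAT, Matrix.mul_assoc]
  have hΛiT : (Λ⁻¹)ᵀ = Λ⁻¹ := by rw [Matrix.transpose_nonsing_inv, hΛT]
  -- (1 - Z Zᵀ) absorbs Λ and Λ⁻¹
  have hQ' : (1 - Z * Zᵀ) * Λ = 1 - Z * Zᵀ := by
    have e : (Z * Zᵀ) * (Z * A * Zᵀ) = Z * A * Zᵀ := by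
      rw [← Matrix.mul_assoc, ← Matrix.mul_assoc, hZZZ]
    rw [hΛ]
    simp only [Matrix.sub_mul, Matrix.mul_sub, Matrix.one_mul, Matrix.mul_one, e]
    abel
  have hQinv : (1 - Z * Zᵀ) * Λ⁻¹ = 1 - Z * Zᵀ := by
    have : (1 - Z * Zᵀ) * Λ⁻¹ = ((1 - Z * Zᵀ) * Λ) * Λ⁻¹ := by rw [hQ']
    rw [this, Matrix.mul_assoc, hinv1, Matrix.mul_one]
  have hZQ : Zᵀ * (1 - Z * Zᵀ) = 0 := by
    simp [Matrix.mul_sub, hZT]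
  -- key identity
  have hkey : Z * ((1 : Matrix (Fin N) (Fin N) ℝ) - A) * Zᵀ = Λ - (1 - Z * Zᵀ) := by
    rw [hΛ]
    simp only [Matrix.mul_sub, Matrix.sub_mul, Matrix.mul_one, Matrix.one_mul]
    abel
  have hQ : Λ * (1 - Z * Zᵀ) = 1 - Z * Zᵀ := by
    have e2 : Z * A * Zᵀ * (Z * Zᵀ) = Z * A * Zᵀ := by
      rw [Matrix.mul_assoc (Z * A) Zᵀ (Z * Zᵀ), hZT]
    rw [hΛ]
    simp only [Matrix.sub_mul, Matrix.mul_sub, Matrix.one_mul, Matrix.mul_one, e2]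
    abel
  have hinvQ : Λ⁻¹ * (1 - Z * Zᵀ) = 1 - Z * Zᵀ := by
    have : Λ⁻¹ * (1 - Z * Zᵀ) = Λ⁻¹ * (Λ * (1 - Z * Zᵀ)) := by rw [hQ]
    rw [this, ← Matrix.mul_assoc, hinv2, Matrix.one_mul]
  have hcore : Zᵀ * Λ⁻¹ * (Z * ((1 : Matrix (Fin N) (Fin N) ℝ) - A) * Zᵀ) * Λ⁻¹ * Z
      = Zᵀ * Λ⁻¹ * Z := by
    rw [hkey]
    have t1 : Zᵀ * Λ⁻¹ * Λ = Zᵀ := by rw [Matrix.mul_assoc, hinv2, Matrix.mul_one]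
    rw [Matrix.mul_sub, Matrix.sub_mul, Matrix.sub_mul, t1,
      Matrix.mul_assoc Zᵀ Λ⁻¹ (1 - Z * Zᵀ), hinvQ, hZQ]
    simp
  -- transpose of P
  have hPT : Pᵀ = ((1 : Matrix (Fin N) (Fin N) ℝ) - A) * (Zᵀ * Λ⁻¹ * Z) := by
    rw [hP]
    simp only [Matrix.transpose_mul, Matrix.transpose_transpose, hBT, hΛiT]
    simp [Matrix.mul_assoc]
  constructor
  · have : (((1 : Matrix (Fin N) (Fin N) ℝ) - A) * P)ᵀ = Pᵀ * (1 - A)ᵀ := by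
      rw [Matrix.transpose_mul]
    rw [this, hBT, hPT, hP]
    simp [Matrix.mul_assoc]
  · have hcore2 : Zᵀ * Λ⁻¹ * (Z * ((1 : Matrix (Fin N) (Fin N) ℝ) - A) * Zᵀ) * Λ⁻¹ * Z
        * ((1 : Matrix (Fin N) (Fin N) ℝ) - A)
        = Zᵀ * Λ⁻¹ * Z * ((1 : Matrix (Fin N) (Fin N) ℝ) - A) := by
      rw [hcore]
    have main : Pᵀ * (((1 : Matrix (Fin N) (Fin N) ℝ) - A) * P)
        = Pᵀ * ((1 : Matrix (Fin N) (Fin N) ℝ) - A) := by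
      rw [hPT, hP]
      simp only [Matrix.mul_assoc] at hcore2 ⊢
      rw [hcore2]
    rw [Matrix.mul_sub, Matrix.mul_one, Matrix.mul_assoc, main, sub_self]
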